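/- Let X be a finite braided indecomposable rack. Then X has degree 1, 2, 3, 4 or 6; that is, for every x ∈ X the order of the permutation φ_x is 1, 2, 3, 4 or 6. -/

import Mathlib

structure Rack' (X : Type*) where
  act : X → X → X
  act_bijective : ∀ x, Function.Bijective (act x)
  self_distrib : ∀ x y z, act x (act y z) = act (act x y) (act x z)

namespace Rack'

variable {X : Type*} (R : Rack' X)

/-- The left translation `φ_x : y ↦ x ▷ y` as a permutation of `X`. -/
noncomputable def phi (x : X) : Equiv.Perm X :=
  Equiv.ofBijective (R.act x) (R.act_bijective x)

@[simp] theorem phi_apply (x y : X) : R.phi x y = R.act x y := rfl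

/-- A quandle is a rack with `x ▷ x = x`. -/
def IsQuandle : Prop := ∀ x, R.act x x = x

/-- A rack is braided if it is a quandle and for all `x, y` at least one of
`x ▷ (y ▷ x) = y` and `x ▷ y = y` holds. -/
def IsBraided : Prop :=
  R.IsQuandle ∧ ∀ x y, R.act x (R.act y x) = y ∨ R.act x y = y

/-- The inner group of a rack: the subgroup of the symmetric group generated by all
left translations. -/
def innerGroup : Subgroup (Equiv.Perm X) :=
  Subgroup.closure (Set.range fun x => R.phi x)

/-- A rack is indecomposable if its inner group acts transitively. -/
def IsIndecomposable : Prop := ∀ x y : X, ∃ g ∈ R.innerGroup, g x = y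

/-- A subrack: a nonempty subset closed under the operation which is itself a rack
under the restricted operation. -/
def IsSubrack (Y : Set X) : Prop :=
  Y.Nonempty ∧ (∀ x ∈ Y, ∀ y ∈ Y, R.act x y ∈ Y) ∧
    ∀ x ∈ Y, ∀ y ∈ Y, ∃ z ∈ Y, R.act x z = y

/-- The first Hurwitz braid `σ₁(x,y,z) = (x ▷ y, x, z)`. -/
noncomputable def sigma1 : Equiv.Perm (X × X × X) :=
  Equiv.ofBijective (fun p => (R.act p.1 p.2.1, p.1, p.2.2)) (by
    constructor
    · rintro ⟨a, b, c⟩ ⟨a', b', c'⟩ h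
      simp only [Prod.mk.injEq] at h
      obtain ⟨h1, rfl, rfl⟩ := h
      obtain rfl := (R.act_bijective a).1 h1
      rfl
    · rintro ⟨u, v, w⟩
      refine ⟨(v, (R.phi v).symm u, w), ?_⟩
      have h : R.act v ((R.phi v).symm u) = u := (R.phi v).apply_symm_apply u
      simp [h])

/-- The second Hurwitz braid `σ₂(x,y,z) = (x, y ▷ z, y)`. -/
noncomputable def sigma2 : Equiv.Perm (X × X × X) :=
  Equiv.ofBijective (fun p => (p.1, R.act p.2.1 p.2.2, p.2.1)) (by
    constructor
    · rintro ⟨a, b, c⟩ ⟨a', b', c'⟩ h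
      simp only [Prod.mk.injEq] at h
      obtain ⟨rfl, h1, rfl⟩ := h
      obtain rfl := (R.act_bijective b).1 h1
      rfl
    · rintro ⟨u, v, w⟩
      refine ⟨(u, w, (R.phi w).symm v), ?_⟩
      have h : R.act w ((R.phi w).symm v) = v := (R.phi w).apply_symm_apply v
      simp [h])

/-- The subgroup of the symmetric group of `X³` generated by the two Hurwitz braids. -/
def hurwitzGroup : Subgroup (Equiv.Perm (X × X × X)) :=
  Subgroup.closure {R.sigma1, R.sigma2}

/-- The Hurwitz orbit of a triple. -/
def hurwitzOrbit (p : X × X × X) : Set (X × X × X) :=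
  {q | ∃ g ∈ R.hurwitzGroup, g p = q}

/-- A subset of `X³` is a Hurwitz orbit if it is the Hurwitz orbit of some triple. -/
def IsHurwitzOrbit (O : Set (X × X × X)) : Prop := ∃ p, O = R.hurwitzOrbit p

/-- A quarantine of a Hurwitz orbit `O`: a nonempty subset `Q ⊆ O` such that for every
triple `(x,y,z) ∈ O`, if two of `(x,y,z)`, `(x, y▷z, y)`, `(x▷(y▷z), x, y)` lie in `Q`
then so does the third. -/
def IsQuarantine (O Q : Set (X × X × X)) : Prop :=
  Q.Nonempty ∧ Q ⊆ O ∧ ∀ p ∈ O,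
    ((p ∈ Q ∧ R.sigma2 p ∈ Q) → R.sigma1 (R.sigma2 p) ∈ Q) ∧
    ((p ∈ Q ∧ R.sigma1 (R.sigma2 p) ∈ Q) → R.sigma2 p ∈ Q) ∧
    ((R.sigma2 p ∈ Q ∧ R.sigma1 (R.sigma2 p) ∈ Q) → p ∈ Q)

/-- A plague of a Hurwitz orbit `O`: a subset `P ⊆ O` whose smallest containing
quarantine is `O` itself. -/
def IsPlague (O P : Set (X × X × X)) : Prop :=
  P.Nonempty ∧ P ⊆ O ∧ ∀ Q, R.IsQuarantine O Q → P ⊆ Q → Q = O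

/-- Two racks are isomorphic if there is a bijection respecting the operations. -/
def IsIsomorphic {Y : Type*} (S : Rack' Y) : Prop :=
  ∃ f : X ≃ Y, ∀ a b, f (R.act a b) = S.act (f a) (f b)

end Rack'

namespace BraidedProof

variable {X : Type*} (R : Rack' X)

lemma mul_app (f g : Equiv.Perm X) (p : X) : (f * g) p = f (g p) := rfl

lemma appSucc (f : Equiv.Perm X) (n : ℕ) (p : X) : (f ^ (n + 1)) p = (f ^ n) (f p) := by
  rw [pow_succ]; rfl

lemma app2 (f : Equiv.Perm X) (p : X) : (f ^ 2) p = f (f p) := by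
  have h : (2:ℕ) = 1 + 1 := rfl
  rw [h, appSucc, pow_one]

lemma app3 (f : Equiv.Perm X) (p : X) : (f ^ 3) p = f (f (f p)) := by
  have h : (3:ℕ) = 2 + 1 := rfl
  rw [h, appSucc, app2]

lemma app4 (f : Equiv.Perm X) (p : X) : (f ^ 4) p = f (f (f (f p))) := by
  have h : (4:ℕ) = 3 + 1 := rfl
  rw [h, appSucc, app3]

lemma app6 (f : Equiv.Perm X) (p : X) : (f ^ 6) p = f (f (f (f (f (f p))))) := by
  have h : (6:ℕ) = 5 + 1 := rfl
  have h5 : (5:ℕ) = 4 + 1 := rfl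
  rw [h, appSucc, h5, appSucc, app4]

lemma fix_pow (f : Equiv.Perm X) (p : X) (h : f p = p) (n : ℕ) : (f ^ n) p = p := by
  induction n with
  | zero => rfl
  | succ k ih => rw [appSucc, h, ih]

lemma perm_apply_inv_self (f : Equiv.Perm X) (p : X) : f (f⁻¹ p) = p :=
  f.apply_symm_apply p

lemma perm_inv_apply_self (f : Equiv.Perm X) (p : X) : f⁻¹ (f p) = p :=
  f.symm_apply_apply p

lemma inv_app_of_app (f : Equiv.Perm X) {p q : X} (h : f p = q) : f⁻¹ q = p := by
  rw [← h]; exact perm_inv_apply_self f p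

-- conjugation lemmas (pure group theory)
lemma conj_pow_aux {G : Type*} [Group G] (a x : G) (n : ℕ) :
    (a * x * a⁻¹) ^ n = a * x ^ n * a⁻¹ := by
  rw [← MulAut.conj_apply, ← map_pow, MulAut.conj_apply]

lemma braid_conj {G : Type*} [Group G] {s u : G} (h : s * u * s = u * s * u) (n : ℕ) :
    u * s ^ n * u⁻¹ = s⁻¹ * u ^ n * s := by
  have h1 : u * s * u⁻¹ = s⁻¹ * u * s := by
    have h2 : s * (u * s * u⁻¹) = s * (s⁻¹ * u * s) := by
      rw [← mul_assoc, ← mul_assoc, h]; group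
    exact mul_left_cancel h2
  calc u * s ^ n * u⁻¹ = (u * s * u⁻¹) ^ n := by rw [conj_pow_aux]
    _ = (s⁻¹ * u * s) ^ n := by rw [h1]
    _ = s⁻¹ * u ^ n * s := by
        have h3 := conj_pow_aux s⁻¹ u n
        simpa using h3

lemma delta_conj_a {G : Type*} [Group G] {a b : G} (h : a * b * a = b * a * b) :
    (a * b * a) * a * (a * b * a)⁻¹ = b := by
  have h1 : (a * b * a) * a = b * (a * b * a) := by
    calc (a * b * a) * a = (b * a * b) * a := by rw [h]
      _ = b * (a * b * a) := by group
  rw [h1]; group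

lemma delta_conj_b {G : Type*} [Group G] {a b : G} (h : a * b * a = b * a * b) :
    (a * b * a) * b * (a * b * a)⁻¹ = a := by
  have h1 : (a * b * a) * b = a * (a * b * a) := by
    calc (a * b * a) * b = a * (b * a * b) := by group
      _ = a * (a * b * a) := by rw [← h]
  rw [h1]; group

section Braided
variable (hR : R.IsBraided)
include hR

lemma act_self (a : X) : R.act a a = a := hR.1 a

omit hR in
lemma phi_conj (a b : X) :
    R.phi (R.act a b) = R.phi a * R.phi b * (R.phi a)⁻¹ := by
  ext c
  have h2 : R.act a ((R.phi a)⁻¹ c) = c := perm_apply_inv_self (R.phi a) c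
  have h := R.self_distrib a b ((R.phi a)⁻¹ c)
  rw [h2] at h
  simpa [Equiv.Perm.mul_apply] using h.symm

lemma dichotomy (a b : X) :
    (R.act a b = b ∧ R.act b a = a) ∨
      (R.act a (R.act b a) = b ∧ R.act b (R.act a b) = a) := by
  rcases hR.2 a b with h1 | h1 <;> rcases hR.2 b a with h2 | h2
  · exact Or.inr ⟨h1, h2⟩
  · rw [h2, hR.1 a] at h1
    subst h1
    exact Or.inl ⟨hR.1 a, hR.1 a⟩
  · rw [h1, hR.1 b] at h2
    subst h2
    exact Or.inl ⟨hR.1 b, hR.1 b⟩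
  · exact Or.inl ⟨h1, h2⟩

omit hR in
lemma phi_comm (a b : X) (h : R.act a b = b) :
    R.phi a * R.phi b = R.phi b * R.phi a := by
  have h1 := phi_conj R a b
  rw [h] at h1
  have h2 := congrArg (fun g => g * R.phi a) h1
  simpa [mul_assoc] using h2.symm

omit hR in
lemma phi_braid (a b : X) (h : R.act a (R.act b a) = b) :
    R.phi a * R.phi b * R.phi a = R.phi b * R.phi a * R.phi b := by
  have h1 := phi_conj R a (R.act b a)
  rw [h, phi_conj R b a] at h1
  have h2 := congrArg (fun g => g * R.phi a * R.phi b) h1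
  simpa [mul_assoc] using h2.symm

omit hR in
lemma phi_pow (a b : X) (n : ℕ) :
    R.phi ((R.phi a ^ n) b) = R.phi a ^ n * R.phi b * (R.phi a ^ n)⁻¹ := by
  induction n with
  | zero => simp
  | succ k ih =>
      have h1 : (R.phi a ^ (k + 1)) b = R.act a ((R.phi a ^ k) b) := by
        rw [pow_succ']; rfl
      rw [h1, phi_conj, ih]
      group

end Braided

section Braided
variable (hR : R.IsBraided)
include hR

lemma claimA (a b : X) : (R.phi a ^ 4) b = b ∨ (R.phi a ^ 6) b = b := by
  by_cases hb : R.phi a b = b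
  · exact Or.inl (fix_pow _ _ hb 4)
  rcases dichotomy R hR a b with ⟨h1, _⟩ | ⟨h1, h2⟩
  · exact absurd h1 hb
  have hbr : R.phi a * R.phi b * R.phi a = R.phi b * R.phi a * R.phi b :=
    phi_braid R a b h1
  have hsa : R.phi a a = a := hR.1 a
  have hE1 : R.phi b (R.phi a b) = a := h2
  have hsb : R.phi a (R.phi b a) = b := h1
  have c1 : (R.phi a * R.phi b * R.phi a) (R.phi a b)
      = (R.phi b * R.phi a * R.phi b) (R.phi a b) := by rw [hbr]
  simp only [mul_app] at c1
  rw [hE1, hsa] at c1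
  -- c1 : phi a (phi b (phi a (phi a b))) = phi b a
  have hP1 : R.phi a (R.phi a (R.phi b (R.phi a (R.phi a b)))) = b := by
    rw [c1]; exact hsb
  by_cases hc : (R.phi a ^ 4) b = b
  · exact Or.inl hc
  right
  -- the second point: p2 := (phi a ^ 2) b
  have hp2 : (R.phi a ^ 2) b = R.phi a (R.phi a b) := app2 _ _
  have hne : R.act b ((R.phi a ^ 2) b) ≠ (R.phi a ^ 2) b := by
    intro hEq
    apply hc
    rw [app4]
    have hEq' : R.phi b (R.phi a (R.phi a b)) = R.phi a (R.phi a b) := by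
      rw [← hp2]; exact hEq
    rw [hEq'] at hP1
    exact hP1
  rcases dichotomy R hR b ((R.phi a ^ 2) b) with ⟨hL, _⟩ | ⟨_, hR2⟩
  · exact absurd hL hne
  -- hR2 : R.act ((phi a ^2) b) (R.act b ((phi a^2) b)) = b
  have hphi2 := phi_pow R a b 2
  have hR2' : (R.phi a ^ 2 * R.phi b * (R.phi a ^ 2)⁻¹)
      (R.phi b ((R.phi a ^ 2) b)) = b := by
    rw [← hphi2]; exact hR2
  simp only [mul_app] at hR2'
  -- hR2' : (phi a^2) (phi b ((phi a^2)⁻¹ (phi b ((phi a^2) b)))) = b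
  have hs2c : (R.phi a ^ 2) (R.phi b ((R.phi a ^ 2) b)) = b := by
    rw [hp2, app2]; exact hP1
  have hinv : (R.phi a ^ 2)⁻¹ b = R.phi b ((R.phi a ^ 2) b) :=
    inv_app_of_app _ hs2c
  have he : (R.phi a ^ 2)⁻¹ (R.phi b ((R.phi a ^ 2) b)) = (R.phi a ^ 2) b := by
    apply (R.phi b).injective
    have h4 : (R.phi a ^ 2)⁻¹ b
        = R.phi b ((R.phi a ^ 2)⁻¹ (R.phi b ((R.phi a ^ 2) b))) :=
      inv_app_of_app _ hR2'
    rw [← h4, hinv]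
  have hc2 : (R.phi a ^ 2) ((R.phi a ^ 2) b) = R.phi b ((R.phi a ^ 2) b) := by
    have h5 := perm_apply_inv_self (R.phi a ^ 2) (R.phi b ((R.phi a ^ 2) b))
    rw [he] at h5; exact h5
  have h6 : (6:ℕ) = 2 + (2 + 2) := rfl
  rw [h6, pow_add, pow_add, mul_app, mul_app, hc2, hs2c]

end Braided


section Helpers
variable {X : Type*} (R : Rack' X)

lemma appSucc' (f : Equiv.Perm X) (n : ℕ) (p : X) : (f ^ (n + 1)) p = f ((f ^ n) p) := by
  rw [pow_succ']; rfl

variable (hR : R.IsBraided)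
include hR

lemma sim_of_not_fix (a b : X) (h : R.act a b ≠ b) :
    R.act a (R.act b a) = b ∧ R.act b (R.act a b) = a := by
  rcases dichotomy R hR a b with ⟨h1, _⟩ | hr
  · exact absurd h1 h
  · exact hr

lemma sim_of_not_fix' (a b : X) (h : R.act b a ≠ a) :
    R.act a (R.act b a) = b ∧ R.act b (R.act a b) = a := by
  rcases dichotomy R hR a b with ⟨_, h1⟩ | hr
  · exact absurd h1 h
  · exact hr

lemma fix_pair (a b : X) (h : R.act a b = b) (hne : b ≠ a) : R.act b a = a := by
  rcases dichotomy R hR a b with ⟨_, h1⟩ | ⟨_, h2⟩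
  · exact h1
  · rw [h, hR.1 b] at h2
    exact absurd h2 hne

end Helpers

section NoMix
variable {X : Type*} (R : Rack' X) (hR : R.IsBraided)
include hR

lemma no_mix3 (x z0 v0 : X)
    (hz4 : (R.phi x ^ 4) z0 = z0) (hz2 : (R.phi x ^ 2) z0 ≠ z0)
    (hv3 : (R.phi x ^ 3) v0 = v0) (hv1 : R.phi x v0 ≠ v0) : False := by
  have hsinj := (R.phi x).injective
  have hsz0 : R.phi x z0 ≠ z0 := by
    intro h; apply hz2; rw [app2, h, h]
  have dzv : z0 ≠ v0 := by
    intro h; apply hsz0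
    have h3 : (R.phi x ^ 3) z0 = z0 := by rw [h]; exact hv3
    have h4 : (R.phi x ^ 4) z0 = R.phi x ((R.phi x ^ 3) z0) := appSucc' _ 3 _
    rw [h3] at h4; rw [← h4, hz4]
  obtain ⟨z1, hz1⟩ : ∃ p, R.phi x z0 = p := ⟨_, rfl⟩
  obtain ⟨z2, hz2e⟩ : ∃ p, R.phi x z1 = p := ⟨_, rfl⟩
  obtain ⟨z3, hz3e⟩ : ∃ p, R.phi x z2 = p := ⟨_, rfl⟩
  obtain ⟨v1, hv1e⟩ : ∃ p, R.phi x v0 = p := ⟨_, rfl⟩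
  obtain ⟨v2, hv2e⟩ : ∃ p, R.phi x v1 = p := ⟨_, rfl⟩
  have hz30 : R.phi x z3 = z0 := by
    have h := hz4; rw [app4, hz1, hz2e, hz3e] at h; exact h
  have hv20 : R.phi x v2 = v0 := by
    have h := hv3; rw [app3, hv1e, hv2e] at h; exact h
  have hz2p : (R.phi x ^ 2) z0 = z2 := by rw [app2, hz1, hz2e]
  have hz2ne : z2 ≠ z0 := by rw [hz2p] at hz2; exact hz2
  have dz31 : z3 ≠ z1 := by
    intro h
    apply hz2ne
    have h2 := congrArg (R.phi x) h
    rw [hz30, hz2e] at h2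
    exact h2.symm
  have dv10 : v1 ≠ v0 := by intro h; exact hv1 (by rw [hv1e, h])
  have dv21 : v2 ≠ v1 := by
    intro h
    exact dv10 (hsinj (by rw [hv2e, hv1e]; exact h))
  have dz3v0 : z3 ≠ v0 := by
    intro h
    have h1 : (R.phi x ^ 3) z3 = z3 := by rw [h]; exact hv3
    have h2 : (R.phi x ^ 3) z3 = z2 := by rw [app3, hz30, hz1, hz2e]
    have h23 : z2 = z3 := by rw [← h2, h1]
    have h12 : z1 = z2 := hsinj (by rw [hz2e, hz3e, h23])
    have h01 : z0 = z1 := hsinj (by rw [hz1, hz2e, h12])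
    exact hsz0 (by rw [hz1, ← h01])
  have hsx : R.phi x x = x := hR.1 x
  have huz0 : R.phi z0 z0 = z0 := hR.1 z0
  have hz3p3 : (R.phi x ^ 3) z0 = z3 := by rw [app3, hz1, hz2e, hz3e]
  have hphiz3 : R.phi z3 = R.phi x ^ 3 * R.phi z0 * (R.phi x ^ 3)⁻¹ := by
    rw [← hz3p3]; exact phi_pow R x z0 3
  have hi3v0 : (R.phi x ^ 3)⁻¹ v0 = v0 := inv_app_of_app _ hv3
  by_cases hbot : R.act z0 v0 = v0
  · -- commuting case
    have hwz0 : R.act v0 z0 = z0 := by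
      rcases dichotomy R hR z0 v0 with ⟨_, h1⟩ | ⟨_, h2⟩
      · exact h1
      · rw [hbot, hR.1 v0] at h2
        exact absurd h2 dzv.symm
    have hcomm : R.phi z0 * R.phi v0 = R.phi v0 * R.phi z0 := phi_comm R z0 v0 hbot
    obtain ⟨hA, hB⟩ := sim_of_not_fix R hR x z0 hsz0
    have hux : R.phi z0 x = z3 := by
      apply hsinj; rw [hz30]; exact hA
    obtain ⟨hA', hB'⟩ := sim_of_not_fix R hR x v0 hv1
    have hwx : R.phi v0 x = v2 := by
      apply hsinj; rw [hv20]; exact hA'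
    have hz3v0 : R.act z3 v0 = v0 := by
      show R.phi z3 v0 = v0
      rw [hphiz3]
      simp only [mul_app]
      rw [hi3v0]
      show (R.phi x ^ 3) (R.act z0 v0) = v0
      rw [hbot]
      exact hv3
    have hwz3 : R.phi v0 z3 = z3 := fix_pair R hR z3 v0 hz3v0 (Ne.symm dz3v0)
    have hkey : R.phi v0 z3 = R.phi z0 v2 := by
      rw [← hux, ← hwx]
      calc R.phi v0 (R.phi z0 x) = (R.phi v0 * R.phi z0) x := rfl
        _ = (R.phi z0 * R.phi v0) x := by rw [hcomm]
        _ = R.phi z0 (R.phi v0 x) := rfl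
    rw [hwz3] at hkey
    have hv2x : v2 = x := (R.phi z0).injective (by rw [hux, ← hkey])
    have hv0x : v0 = x := by rw [← hv20, hv2x, hsx]
    exact hv1 (by rw [hv0x, hsx])
  · -- braid case
    obtain ⟨hWU, hUW⟩ := sim_of_not_fix R hR z0 v0 hbot
    obtain ⟨q, hq⟩ : ∃ p, R.phi z0 v0 = p := ⟨_, rfl⟩
    obtain ⟨p0, hp0⟩ : ∃ p, R.phi v0 z0 = p := ⟨_, rfl⟩
    have hup0 : R.phi z0 p0 = v0 := by rw [← hp0]; exact hWU
    have hwq : R.phi v0 q = z0 := by rw [← hq]; exact hUW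
    have hqv0 : q ≠ v0 := by intro h; apply hbot; rw [← h] at hq ⊢; exact hq
    have hp0z0 : p0 ≠ z0 := by
      intro h
      rw [h] at hup0
      rw [huz0] at hup0
      exact dzv hup0
    have hbruw : R.phi z0 * R.phi v0 * R.phi z0 = R.phi v0 * R.phi z0 * R.phi v0 :=
      phi_braid R z0 v0 hWU
    obtain ⟨hA, _⟩ := sim_of_not_fix R hR x z0 hsz0
    obtain ⟨hA', _⟩ := sim_of_not_fix R hR x v0 hv1
    have hbrsu : R.phi x * R.phi z0 * R.phi x = R.phi z0 * R.phi x * R.phi z0 :=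
      phi_braid R x z0 hA
    have hbrsw : R.phi x * R.phi v0 * R.phi x = R.phi v0 * R.phi x * R.phi v0 :=
      phi_braid R x v0 hA'
    have h6v0 : (R.phi x ^ 6) v0 = v0 := by
      have h : (6:ℕ) = 3 + 3 := rfl
      rw [h, pow_add, mul_app, hv3, hv3]
    have h6z0 : (R.phi x ^ 6) z0 = z2 := by
      have h : (6:ℕ) = 2 + 4 := rfl
      rw [h, pow_add, mul_app, hz4, hz2p]
    have h4v0 : (R.phi x ^ 4) v0 = v1 := by
      have h : (4:ℕ) = 3 + 1 := rfl
      rw [h, appSucc', hv3, hv1e]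
    have h8v0 : (R.phi x ^ 8) v0 = v2 := by
      have h : (8:ℕ) = 2 + 6 := rfl
      rw [h, pow_add, mul_app, h6v0, app2, hv1e, hv2e]
    have h8z0 : (R.phi x ^ 8) z0 = z0 := by
      have h : (8:ℕ) = 4 + 4 := rfl
      rw [h, pow_add, mul_app, hz4, hz4]
    -- (W3) : w ((s^3) q) = z3
    have hz3v0 : R.act z3 v0 = (R.phi x ^ 3) q := by
      show R.phi z3 v0 = (R.phi x ^ 3) q
      rw [hphiz3]; simp only [mul_app]; rw [hi3v0]
      show (R.phi x ^ 3) (R.phi z0 v0) = _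
      rw [hq]
    have hz3v0ne : R.act z3 v0 ≠ v0 := by
      rw [hz3v0]
      intro h
      exact hqv0 (by rw [← inv_app_of_app _ h, hi3v0])
    obtain ⟨hW3pre, _⟩ := sim_of_not_fix' R hR v0 z3 hz3v0ne
    rw [hz3v0] at hW3pre
    have hW3 : R.phi v0 ((R.phi x ^ 3) q) = z3 := hW3pre
    -- (W2) : w ((s^6) q) = z2
    have hphiz2 : R.phi z2 = R.phi x ^ 6 * R.phi z0 * (R.phi x ^ 6)⁻¹ := by
      rw [← h6z0]; exact phi_pow R x z0 6
    have hi6v0 : (R.phi x ^ 6)⁻¹ v0 = v0 := inv_app_of_app _ h6v0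
    have hz2v0 : R.act z2 v0 = (R.phi x ^ 6) q := by
      show R.phi z2 v0 = _
      rw [hphiz2]; simp only [mul_app]; rw [hi6v0]
      show (R.phi x ^ 6) (R.phi z0 v0) = _
      rw [hq]
    have hz2v0ne : R.act z2 v0 ≠ v0 := by
      rw [hz2v0]; intro h
      exact hqv0 (by rw [← inv_app_of_app _ h, hi6v0])
    obtain ⟨hW2pre, _⟩ := sim_of_not_fix' R hR v0 z2 hz2v0ne
    rw [hz2v0] at hW2pre
    have hW2 : R.phi v0 ((R.phi x ^ 6) q) = z2 := hW2pre
    -- (U1) : u ((s^4) p0) = v1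
    have hphiv1 : R.phi v1 = R.phi x ^ 4 * R.phi v0 * (R.phi x ^ 4)⁻¹ := by
      rw [← h4v0]; exact phi_pow R x v0 4
    have hi4z0 : (R.phi x ^ 4)⁻¹ z0 = z0 := inv_app_of_app _ hz4
    have hv1z0 : R.act v1 z0 = (R.phi x ^ 4) p0 := by
      show R.phi v1 z0 = _
      rw [hphiv1]; simp only [mul_app]; rw [hi4z0]
      show (R.phi x ^ 4) (R.phi v0 z0) = _
      rw [hp0]
    have hv1z0ne : R.act v1 z0 ≠ z0 := by
      rw [hv1z0]; intro h
      exact hp0z0 (by rw [← inv_app_of_app _ h, hi4z0])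
    obtain ⟨hU1pre, _⟩ := sim_of_not_fix' R hR z0 v1 hv1z0ne
    rw [hv1z0] at hU1pre
    have hU1 : R.phi z0 ((R.phi x ^ 4) p0) = v1 := hU1pre
    -- (U2) : u ((s^8) p0) = v2
    have hphiv2 : R.phi v2 = R.phi x ^ 8 * R.phi v0 * (R.phi x ^ 8)⁻¹ := by
      rw [← h8v0]; exact phi_pow R x v0 8
    have hi8z0 : (R.phi x ^ 8)⁻¹ z0 = z0 := inv_app_of_app _ h8z0
    have hv2z0 : R.act v2 z0 = (R.phi x ^ 8) p0 := by
      show R.phi v2 z0 = _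
      rw [hphiv2]; simp only [mul_app]; rw [hi8z0]
      show (R.phi x ^ 8) (R.phi v0 z0) = _
      rw [hp0]
    have hv2z0ne : R.act v2 z0 ≠ z0 := by
      rw [hv2z0]; intro h
      exact hp0z0 (by rw [← inv_app_of_app _ h, hi8z0])
    obtain ⟨hU2pre, _⟩ := sim_of_not_fix' R hR z0 v2 hv2z0ne
    rw [hv2z0] at hU2pre
    have hU2 : R.phi z0 ((R.phi x ^ 8) p0) = v2 := hU2pre
    -- braid conversions
    have hiuv0 : (R.phi z0)⁻¹ v0 = p0 := inv_app_of_app _ hup0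
    have hiwz0 : (R.phi v0)⁻¹ z0 = q := inv_app_of_app _ hwq
    have hconv_u : ∀ n : ℕ, R.phi z0 ((R.phi x ^ n) p0)
        = (R.phi x)⁻¹ ((R.phi z0 ^ n) v1) := by
      intro n
      have h := congrArg (fun f => f v0) (braid_conj hbrsu n)
      simp only [mul_app] at h
      rw [hiuv0, hv1e] at h
      exact h
    have hconv_w : ∀ n : ℕ, R.phi v0 ((R.phi x ^ n) q)
        = (R.phi x)⁻¹ ((R.phi v0 ^ n) z1) := by
      intro n
      have h := congrArg (fun f => f z0) (braid_conj hbrsw n)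
      simp only [mul_app] at h
      rw [hiwz0, hz1] at h
      exact h
    have hu4 : (R.phi z0 ^ 4) v1 = v2 := by
      have h := hconv_u 4
      rw [hU1] at h
      have h2 := congrArg (R.phi x) h
      rw [perm_apply_inv_self (R.phi x), hv2e] at h2
      exact h2.symm
    have hu8 : (R.phi z0 ^ 8) v1 = v0 := by
      have h := hconv_u 8
      rw [hU2] at h
      have h2 := congrArg (R.phi x) h
      rw [perm_apply_inv_self (R.phi x), hv20] at h2
      exact h2.symm
    have hw3 : (R.phi v0 ^ 3) z1 = z0 := by
      have h := hconv_w 3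
      rw [hW3] at h
      have h2 := congrArg (R.phi x) h
      rw [perm_apply_inv_self (R.phi x), hz30] at h2
      exact h2.symm
    have hw6 : (R.phi v0 ^ 6) z1 = z3 := by
      have h := hconv_w 6
      rw [hW2] at h
      have h2 := congrArg (R.phi x) h
      rw [perm_apply_inv_self (R.phi x), hz3e] at h2
      exact h2.symm
    -- claimA
    have hw4 : (R.phi v0 ^ 4) z1 = z1 := by
      rcases claimA R hR v0 z1 with h | h
      · exact h
      · exact absurd (by rw [← hw6, h] : z3 = z1) dz31
    have hu6 : (R.phi z0 ^ 6) v1 = v1 := by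
      rcases claimA R hR z0 v1 with h | h
      · exact absurd (by rw [← hu4, h] : v2 = v1) dv21
      · exact h
    have hw4z0 : (R.phi v0 ^ 4) z0 = z0 := by
      rw [← hw3, ← mul_app, ← pow_add]
      have h : (4 + 3 : ℕ) = 3 + 4 := rfl
      rw [h, pow_add, mul_app, hw4, hw3]
    have hu4v0 : (R.phi z0 ^ 4) v0 = v1 := by
      rw [← hu8, ← mul_app, ← pow_add]
      have h : (4 + 8 : ℕ) = 6 + 6 := rfl
      rw [h, pow_add, mul_app, hu6, hu6]
    -- delta transfer
    have hd : (R.phi z0 * R.phi v0 * R.phi z0) * R.phi v0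
        * (R.phi z0 * R.phi v0 * R.phi z0)⁻¹ = R.phi z0 := delta_conj_b hbruw
    have hd4 : (R.phi z0 * R.phi v0 * R.phi z0) * R.phi v0 ^ 4
        * (R.phi z0 * R.phi v0 * R.phi z0)⁻¹ = R.phi z0 ^ 4 := by
      have h := conj_pow_aux (R.phi z0 * R.phi v0 * R.phi z0) (R.phi v0) 4
      rw [hd] at h
      exact h.symm
    have hDz0 : (R.phi z0 * R.phi v0 * R.phi z0) z0 = v0 := by
      simp only [mul_app]
      rw [show R.phi z0 z0 = z0 from huz0, hp0]
      exact hup0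
    have hfinal : (R.phi z0 ^ 4) v0 = v0 := by
      have h := congrArg (fun f => f v0) hd4
      simp only [mul_app] at h
      rw [inv_app_of_app _ hDz0, hw4z0, huz0, hp0, hup0] at h
      exact h.symm
    rw [hu4v0] at hfinal
    exact dv10 hfinal

end NoMix


section NoMix6
variable {X : Type*} (R : Rack' X) (hR : R.IsBraided)
include hR

lemma no_mix6 (x z0 v0 : X)
    (hz4 : (R.phi x ^ 4) z0 = z0) (hz2 : (R.phi x ^ 2) z0 ≠ z0)
    (hv6 : (R.phi x ^ 6) v0 = v0) (hv4 : (R.phi x ^ 4) v0 ≠ v0)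
    (hv3n : (R.phi x ^ 3) v0 ≠ v0) : False := by
  have hsinj := (R.phi x).injective
  have hsz0 : R.phi x z0 ≠ z0 := by
    intro h; apply hz2; rw [app2, h, h]
  have hv1 : R.phi x v0 ≠ v0 := by
    intro h; exact hv4 (fix_pow _ _ h 4)
  have hv2n : (R.phi x ^ 2) v0 ≠ v0 := by
    intro h; apply hv4
    have h4 : (4:ℕ) = 2 + 2 := rfl
    rw [h4, pow_add, mul_app, h, h]
  have dzv : z0 ≠ v0 := by
    intro h; apply hv4; rw [← h]; exact hz4
  obtain ⟨z1, hz1⟩ : ∃ p, R.phi x z0 = p := ⟨_, rfl⟩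
  obtain ⟨z2, hz2e⟩ : ∃ p, R.phi x z1 = p := ⟨_, rfl⟩
  obtain ⟨z3, hz3e⟩ : ∃ p, R.phi x z2 = p := ⟨_, rfl⟩
  obtain ⟨v1, hv1e⟩ : ∃ p, R.phi x v0 = p := ⟨_, rfl⟩
  obtain ⟨v2, hv2e⟩ : ∃ p, R.phi x v1 = p := ⟨_, rfl⟩
  obtain ⟨v3, hv3e⟩ : ∃ p, R.phi x v2 = p := ⟨_, rfl⟩
  obtain ⟨v4, hv4e⟩ : ∃ p, R.phi x v3 = p := ⟨_, rfl⟩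
  obtain ⟨v5, hv5e⟩ : ∃ p, R.phi x v4 = p := ⟨_, rfl⟩
  have hz30 : R.phi x z3 = z0 := by
    have h := hz4; rw [app4, hz1, hz2e, hz3e] at h; exact h
  have hv50 : R.phi x v5 = v0 := by
    have h := hv6; rw [app6, hv1e, hv2e, hv3e, hv4e, hv5e] at h; exact h
  have hz2p : (R.phi x ^ 2) z0 = z2 := by rw [app2, hz1, hz2e]
  have hz2ne : z2 ≠ z0 := by rw [hz2p] at hz2; exact hz2
  have dz31 : z3 ≠ z1 := by
    intro h
    apply hz2ne
    have h2 := congrArg (R.phi x) h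
    rw [hz30, hz2e] at h2
    exact h2.symm
  have hv2p : (R.phi x ^ 2) v0 = v2 := by rw [app2, hv1e, hv2e]
  have h3v0 : (R.phi x ^ 3) v0 = v3 := by rw [app3, hv1e, hv2e, hv3e]
  have h4v0 : (R.phi x ^ 4) v0 = v4 := by rw [app4, hv1e, hv2e, hv3e, hv4e]
  have dv13 : v1 ≠ v3 := by
    intro h
    have h02 : v0 = v2 := hsinj (by rw [hv1e, hv3e]; exact h)
    apply hv2n; rw [hv2p]; exact h02.symm
  have dv15 : v1 ≠ v5 := by
    intro h
    have h04 : v0 = v4 := hsinj (by rw [hv1e, hv5e]; exact h)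
    apply hv4; rw [h4v0]; exact h04.symm
  have dv50 : v5 ≠ v0 := by
    intro h
    have h2 := congrArg (R.phi x) h
    rw [hv50, hv1e] at h2
    exact hv1 (by rw [hv1e, ← h2])
  have hsx : R.phi x x = x := hR.1 x
  have dv5x : v5 ≠ x := by
    intro h
    have h0 : v0 = x := by rw [← hv50, h, hsx]
    exact dv50 (by rw [h, ← h0])
  have dv4z0 : v4 ≠ z0 := by
    intro h
    have h1 : (R.phi x ^ 4) v4 = v4 := by rw [h]; exact hz4
    have h2 : (R.phi x ^ 4) v4 = v2 := by rw [app4, hv5e, hv50, hv1e, hv2e]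
    have h24 : v2 = v4 := by rw [← h2, h1]
    have h13 : v1 = v3 := hsinj (by rw [hv2e, hv4e]; exact h24)
    exact dv13 h13
  have dv2z0 : v2 ≠ z0 := by
    intro h
    have h1 : (R.phi x ^ 4) v2 = v2 := by rw [h]; exact hz4
    have h2 : (R.phi x ^ 4) v2 = v0 := by rw [app4, hv3e, hv4e, hv5e, hv50]
    apply hv2n; rw [hv2p, ← h2, h1]
  have dv53 : v5 ≠ v3 := by
    intro h
    have h42 : v4 = v2 := hsinj (by rw [hv5e, hv3e]; exact h)
    have h31 : v3 = v1 := hsinj (by rw [hv4e, hv2e]; exact h42)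
    exact dv13 h31.symm
  have huz0 : R.phi z0 z0 = z0 := hR.1 z0
  have h6z0 : (R.phi x ^ 6) z0 = z2 := by
    have h : (6:ℕ) = 2 + 4 := rfl
    rw [h, pow_add, mul_app, hz4, hz2p]
  have h8z0 : (R.phi x ^ 8) z0 = z0 := by
    have h : (8:ℕ) = 4 + 4 := rfl
    rw [h, pow_add, mul_app, hz4, hz4]
  have h8v0 : (R.phi x ^ 8) v0 = v2 := by
    have h : (8:ℕ) = 2 + 6 := rfl
    rw [h, pow_add, mul_app, hv6, hv2p]
  have hs3z1 : (R.phi x ^ 3) z1 = z0 := by rw [app3, hz2e, hz3e, hz30]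
  have hs3v3 : (R.phi x ^ 3) v3 = v0 := by rw [app3, hv4e, hv5e, hv50]
  have hi4z0 : (R.phi x ^ 4)⁻¹ z0 = z0 := inv_app_of_app _ hz4
  have hi8z0 : (R.phi x ^ 8)⁻¹ z0 = z0 := inv_app_of_app _ h8z0
  have hi6v0 : (R.phi x ^ 6)⁻¹ v0 = v0 := inv_app_of_app _ hv6
  have hi3z0 : (R.phi x ^ 3)⁻¹ z0 = z1 := inv_app_of_app _ hs3z1
  have hi3v0 : (R.phi x ^ 3)⁻¹ v0 = v3 := inv_app_of_app _ hs3v3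
  have hi1v0 : (R.phi x)⁻¹ v0 = v5 := inv_app_of_app _ hv50
  have hz3p3 : (R.phi x ^ 3) z0 = z3 := by rw [app3, hz1, hz2e, hz3e]
  have hphiz3 : R.phi z3 = R.phi x ^ 3 * R.phi z0 * (R.phi x ^ 3)⁻¹ := by
    rw [← hz3p3]; exact phi_pow R x z0 3
  have hphiz2 : R.phi z2 = R.phi x ^ 6 * R.phi z0 * (R.phi x ^ 6)⁻¹ := by
    rw [← h6z0]; exact phi_pow R x z0 6
  have hphiz1 : R.phi z1 = R.phi x ^ 1 * R.phi z0 * (R.phi x ^ 1)⁻¹ := by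
    have h1 : (R.phi x ^ 1) z0 = z1 := by rw [pow_one]; exact hz1
    rw [← h1]; exact phi_pow R x z0 1
  have hphiv4 : R.phi v4 = R.phi x ^ 4 * R.phi v0 * (R.phi x ^ 4)⁻¹ := by
    rw [← h4v0]; exact phi_pow R x v0 4
  have hphiv2 : R.phi v2 = R.phi x ^ 8 * R.phi v0 * (R.phi x ^ 8)⁻¹ := by
    rw [← h8v0]; exact phi_pow R x v0 8
  have hphiv3 : R.phi v3 = R.phi x ^ 3 * R.phi v0 * (R.phi x ^ 3)⁻¹ := by
    rw [← h3v0]; exact phi_pow R x v0 3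
  obtain ⟨hA, hB⟩ := sim_of_not_fix R hR x z0 hsz0
  obtain ⟨hA', hB'⟩ := sim_of_not_fix R hR x v0 hv1
  have hbrsu : R.phi x * R.phi z0 * R.phi x = R.phi z0 * R.phi x * R.phi z0 :=
    phi_braid R x z0 hA
  have hbrsw : R.phi x * R.phi v0 * R.phi x = R.phi v0 * R.phi x * R.phi v0 :=
    phi_braid R x v0 hA'
  have hux : R.phi z0 x = z3 := by
    apply hsinj; rw [hz30]; exact hA
  have huz1 : R.phi z0 z1 = x := by
    have h := hB; rw [show R.act x z0 = z1 from hz1] at h; exact h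
  have hwx : R.phi v0 x = v5 := by
    apply hsinj; rw [hv50]; exact hA'
  have hwv1 : R.phi v0 v1 = x := by
    have h := hB'; rw [show R.act x v0 = v1 from hv1e] at h; exact h
  by_cases hbot : R.act z0 v0 = v0
  · -- commuting case
    have hbotp : R.phi z0 v0 = v0 := hbot
    have hwz0 : R.act v0 z0 = z0 := by
      rcases dichotomy R hR z0 v0 with ⟨_, h1⟩ | ⟨_, h2⟩
      · exact h1
      · rw [hbot, hR.1 v0] at h2
        exact absurd h2 dzv.symm
    have hwz0p : R.phi v0 z0 = z0 := hwz0
    have hcomm : R.phi z0 * R.phi v0 = R.phi v0 * R.phi z0 := phi_comm R z0 v0 hbot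
    have hv4z0 : R.act v4 z0 = z0 := by
      show R.phi v4 z0 = z0
      rw [hphiv4]; simp only [mul_app]; rw [hi4z0, hwz0p]; exact hz4
    have huv4 : R.phi z0 v4 = v4 := fix_pair R hR v4 z0 hv4z0 (Ne.symm dv4z0)
    have hv2z0 : R.act v2 z0 = z0 := by
      show R.phi v2 z0 = z0
      rw [hphiv2]; simp only [mul_app]; rw [hi8z0, hwz0p]; exact h8z0
    have huv2 : R.phi z0 v2 = v2 := fix_pair R hR v2 z0 hv2z0 (Ne.symm dv2z0)
    have hiuv0 : (R.phi z0)⁻¹ v0 = v0 := inv_app_of_app _ hbotp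
    have hconv : ∀ n : ℕ, R.phi z0 ((R.phi x ^ n) v0)
        = (R.phi x)⁻¹ ((R.phi z0 ^ n) v1) := by
      intro n
      have h := congrArg (fun f => f v0) (braid_conj hbrsu n)
      simp only [mul_app] at h
      rw [hiuv0, hv1e] at h
      exact h
    have hu2 : (R.phi z0 ^ 2) v1 = v3 := by
      have h := hconv 2
      rw [hv2p, huv2] at h
      have h2 := congrArg (R.phi x) h
      rw [perm_apply_inv_self (R.phi x), hv3e] at h2
      exact h2.symm
    have hu4' : (R.phi z0 ^ 4) v1 = v5 := by
      have h := hconv 4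
      rw [h4v0, huv4] at h
      have h2 := congrArg (R.phi x) h
      rw [perm_apply_inv_self (R.phi x), hv5e] at h2
      exact h2.symm
    have hut3 : R.phi z0 ((R.phi z0 ^ 3) v1) = v5 := by
      rw [← appSucc']; exact hu4'
    have huv3t : R.phi z0 v3 = (R.phi z0 ^ 3) v1 := by
      rw [← hu2]; exact (appSucc' _ 2 _).symm
    have hwz1 : R.phi v0 z1 = (R.phi z0 ^ 3) v1 := by
      apply (R.phi z0).injective
      rw [hut3]
      have h := congrArg (fun f => f z1) hcomm
      simp only [mul_app] at h
      rw [huz1, hwx] at h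
      exact h
    have ht3z1 : (R.phi z0 ^ 3) v1 ≠ z1 := by
      intro h
      have h2 := congrArg (R.phi z0) h
      rw [hut3, huz1] at h2
      exact dv5x h2
    have hwz1ne : R.act v0 z1 ≠ z1 := by
      intro h
      have h2 : R.phi v0 z1 = z1 := h
      rw [hwz1] at h2
      exact ht3z1 h2
    obtain ⟨_, S2⟩ := sim_of_not_fix R hR v0 z1 hwz1ne
    have hS2 : R.phi z1 ((R.phi z0 ^ 3) v1) = v0 := by
      have h := S2
      rw [show R.act v0 z1 = (R.phi z0 ^ 3) v1 from hwz1] at h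
      exact h
    rw [hphiz1] at hS2
    simp only [mul_app] at hS2
    rw [pow_one] at hS2
    have hI1 : R.phi z0 ((R.phi x)⁻¹ ((R.phi z0 ^ 3) v1)) = v5 := by
      have h := inv_app_of_app (R.phi x) hS2
      rw [hi1v0] at h
      exact h.symm
    have hI2 : (R.phi x)⁻¹ ((R.phi z0 ^ 3) v1) = (R.phi z0 ^ 3) v1 := by
      apply (R.phi z0).injective
      rw [hI1, hut3]
    have hst3 : R.phi x ((R.phi z0 ^ 3) v1) = (R.phi z0 ^ 3) v1 := by
      have h3 := congrArg (R.phi x) hI2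
      rw [perm_apply_inv_self (R.phi x)] at h3
      exact h3.symm
    have hz3v0val : R.act z3 v0 = (R.phi z0 ^ 3) v1 := by
      show R.phi z3 v0 = _
      rw [hphiz3]; simp only [mul_app]
      rw [hi3v0, huv3t]
      exact fix_pow _ _ hst3 3
    have hz3v0ne : R.act z3 v0 ≠ v0 := by
      rw [hz3v0val]
      intro h
      have h2 := congrArg (R.phi z0) h
      rw [hut3, hbotp] at h2
      exact dv50 h2
    obtain ⟨T1, _⟩ := sim_of_not_fix' R hR v0 z3 hz3v0ne
    have hwt3 : R.phi v0 ((R.phi z0 ^ 3) v1) = z3 := by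
      have h := T1; rw [hz3v0val] at h; exact h
    have hfin : R.phi v0 (R.phi z0 v1) = z3 := by
      have h := congrArg (fun f => f v1) hcomm
      simp only [mul_app] at h
      rw [hwv1, hux] at h
      exact h.symm
    have hkey : R.phi z0 v1 = (R.phi z0 ^ 3) v1 :=
      (R.phi v0).injective (by rw [hwt3, hfin])
    have h13 : v1 = v3 := by
      have h2 : (R.phi z0 ^ 3) v1 = R.phi z0 ((R.phi z0 ^ 2) v1) := appSucc' _ 2 _
      rw [h2, hu2] at hkey
      exact (R.phi z0).injective hkey
    exact dv13 h13
  · -- braid case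
    obtain ⟨hWU, hUW⟩ := sim_of_not_fix R hR z0 v0 hbot
    obtain ⟨q, hq⟩ : ∃ p, R.phi z0 v0 = p := ⟨_, rfl⟩
    obtain ⟨p0, hp0⟩ : ∃ p, R.phi v0 z0 = p := ⟨_, rfl⟩
    have hup0 : R.phi z0 p0 = v0 := by rw [← hp0]; exact hWU
    have hwq : R.phi v0 q = z0 := by rw [← hq]; exact hUW
    have hqv0 : q ≠ v0 := by intro h; apply hbot; rw [← h] at hq ⊢; exact hq
    have hp0z0 : p0 ≠ z0 := by
      intro h
      rw [h] at hup0
      rw [huz0] at hup0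
      exact dzv hup0
    have hiuv0 : (R.phi z0)⁻¹ v0 = p0 := inv_app_of_app _ hup0
    have hiwz0 : (R.phi v0)⁻¹ z0 = q := inv_app_of_app _ hwq
    have hconv_u : ∀ n : ℕ, R.phi z0 ((R.phi x ^ n) p0)
        = (R.phi x)⁻¹ ((R.phi z0 ^ n) v1) := by
      intro n
      have h := congrArg (fun f => f v0) (braid_conj hbrsu n)
      simp only [mul_app] at h
      rw [hiuv0, hv1e] at h
      exact h
    have hconv_w : ∀ n : ℕ, R.phi v0 ((R.phi x ^ n) q)
        = (R.phi x)⁻¹ ((R.phi v0 ^ n) z1) := by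
      intro n
      have h := congrArg (fun f => f z0) (braid_conj hbrsw n)
      simp only [mul_app] at h
      rw [hiwz0, hz1] at h
      exact h
    -- (a)
    have hv4z0val : R.act v4 z0 = (R.phi x ^ 4) p0 := by
      show R.phi v4 z0 = _
      rw [hphiv4]; simp only [mul_app]; rw [hi4z0, hp0]
    have hv4z0ne : R.act v4 z0 ≠ z0 := by
      rw [hv4z0val]; intro h
      exact hp0z0 (by rw [← inv_app_of_app _ h, hi4z0])
    obtain ⟨hU4pre, _⟩ := sim_of_not_fix' R hR z0 v4 hv4z0ne
    rw [hv4z0val] at hU4pre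
    have hU4 : R.phi z0 ((R.phi x ^ 4) p0) = v4 := hU4pre
    have hu4 : (R.phi z0 ^ 4) v1 = v5 := by
      have h := hconv_u 4
      rw [hU4] at h
      have h2 := congrArg (R.phi x) h
      rw [perm_apply_inv_self (R.phi x), hv5e] at h2
      exact h2.symm
    -- (b)
    have hv2z0val : R.act v2 z0 = (R.phi x ^ 8) p0 := by
      show R.phi v2 z0 = _
      rw [hphiv2]; simp only [mul_app]; rw [hi8z0, hp0]
    have hv2z0ne : R.act v2 z0 ≠ z0 := by
      rw [hv2z0val]; intro h
      exact hp0z0 (by rw [← inv_app_of_app _ h, hi8z0])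
    obtain ⟨hU8pre, _⟩ := sim_of_not_fix' R hR z0 v2 hv2z0ne
    rw [hv2z0val] at hU8pre
    have hU8 : R.phi z0 ((R.phi x ^ 8) p0) = v2 := hU8pre
    have hu8 : (R.phi z0 ^ 8) v1 = v3 := by
      have h := hconv_u 8
      rw [hU8] at h
      have h2 := congrArg (R.phi x) h
      rw [perm_apply_inv_self (R.phi x), hv3e] at h2
      exact h2.symm
    -- (c)
    have hz2v0val : R.act z2 v0 = (R.phi x ^ 6) q := by
      show R.phi z2 v0 = _
      rw [hphiz2]; simp only [mul_app]; rw [hi6v0, hq]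
    have hz2v0ne : R.act z2 v0 ≠ v0 := by
      rw [hz2v0val]; intro h
      exact hqv0 (by rw [← inv_app_of_app _ h, hi6v0])
    obtain ⟨hW6pre, _⟩ := sim_of_not_fix' R hR v0 z2 hz2v0ne
    rw [hz2v0val] at hW6pre
    have hW6' : R.phi v0 ((R.phi x ^ 6) q) = z2 := hW6pre
    have hw6 : (R.phi v0 ^ 6) z1 = z3 := by
      have h := hconv_w 6
      rw [hW6'] at h
      have h2 := congrArg (R.phi x) h
      rw [perm_apply_inv_self (R.phi x), hz3e] at h2
      exact h2.symm
    -- (d)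
    have hw4 : (R.phi v0 ^ 4) z1 = z1 := by
      rcases claimA R hR v0 z1 with h | h
      · exact h
      · exact absurd (by rw [← hw6, h] : z3 = z1) dz31
    have hw2 : (R.phi v0 ^ 2) z1 = z3 := by
      have h6 : (6:ℕ) = 2 + 4 := rfl
      rw [h6, pow_add, mul_app, hw4] at hw6
      exact hw6
    have hwz1ne : R.phi v0 z1 ≠ z1 := by
      intro h
      have h2 : (R.phi v0 ^ 2) z1 = z1 := by rw [app2, h, h]
      exact dz31 (by rw [← hw2, h2])
    -- (e)
    have hu6 : (R.phi z0 ^ 6) v1 = v1 := by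
      rcases claimA R hR z0 v1 with h | h
      · exact absurd (by rw [← hu4, h] : v5 = v1) (Ne.symm dv15)
      · exact h
    have hu2' : (R.phi z0 ^ 2) v1 = v3 := by
      have h8 : (8:ℕ) = 2 + 6 := rfl
      rw [h8, pow_add, mul_app, hu6] at hu8
      exact hu8
    have huv3t : R.phi z0 v3 = (R.phi z0 ^ 3) v1 := by
      rw [← hu2']; exact (appSucc' _ 2 _).symm
    have hut3 : R.phi z0 ((R.phi z0 ^ 3) v1) = v5 := by
      rw [← appSucc']; exact hu4
    -- (g) pair (z0, v3)
    have hv3z0val : R.act v3 z0 = (R.phi x ^ 3) (R.phi v0 z1) := by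
      show R.phi v3 z0 = _
      rw [hphiv3]; simp only [mul_app]; rw [hi3z0]
    rcases dichotomy R hR z0 v3 with ⟨hg1, _⟩ | ⟨hg1, _⟩
    · -- left: u v3 = v3 → contradiction
      have huv3 : R.phi z0 v3 = v3 := hg1
      have h5 : v5 = v3 := by
        rw [← hu4]
        have h : (4:ℕ) = 2 + 2 := rfl
        rw [h, pow_add, mul_app, hu2', app2, huv3, huv3]
      exact dv53 h5
    · have hG : R.phi z0 ((R.phi x ^ 3) (R.phi v0 z1)) = v3 := by
        have h := hg1
        rw [hv3z0val] at h
        exact h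
      -- (h) pair (v0, z1)
      rcases dichotomy R hR v0 z1 with ⟨hh1, _⟩ | ⟨_, hh2⟩
      · exact hwz1ne hh1
      have hh2p : R.phi z1 (R.phi v0 z1) = v0 := hh2
      rw [hphiz1] at hh2p
      simp only [mul_app] at hh2p
      rw [pow_one] at hh2p
      have hI1 : R.phi z0 ((R.phi x)⁻¹ (R.phi v0 z1)) = v5 := by
        have h := inv_app_of_app (R.phi x) hh2p
        rw [hi1v0] at h
        exact h.symm
      have hI2 : (R.phi x)⁻¹ (R.phi v0 z1) = (R.phi z0 ^ 3) v1 := by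
        apply (R.phi z0).injective
        rw [hI1, hut3]
      have hh' : R.phi v0 z1 = R.phi x ((R.phi z0 ^ 3) v1) := by
        have h := congrArg (R.phi x) hI2
        rw [perm_apply_inv_self (R.phi x)] at h
        exact h
      -- (j) pair (v0, z3)
      have hz3v0val : R.act z3 v0 = (R.phi x ^ 3) ((R.phi z0 ^ 3) v1) := by
        show R.phi z3 v0 = _
        rw [hphiz3]; simp only [mul_app]; rw [hi3v0, huv3t]
      rcases dichotomy R hR v0 z3 with ⟨hj1, _⟩ | ⟨hj1, _⟩
      · -- left: w z3 = z3 → contradiction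
        have hwz3 : R.phi v0 z3 = z3 := hj1
        have h1 : (R.phi v0 ^ 4) z1 = z3 := by
          have h : (4:ℕ) = 2 + 2 := rfl
          rw [h, pow_add, mul_app, hw2, app2, hwz3, hwz3]
        exact dz31 (by rw [← hw4, h1])
      · have hj : R.phi v0 ((R.phi x ^ 3) ((R.phi z0 ^ 3) v1)) = z3 := by
          have h := hj1; rw [hz3v0val] at h; exact h
        have hj2 : R.phi v0 (R.phi x ((R.phi z0 ^ 3) v1)) = z3 := by
          rw [← hh']
          have h := hw2; rw [app2] at h; exact h
        have hkey : (R.phi x ^ 3) ((R.phi z0 ^ 3) v1) = R.phi x ((R.phi z0 ^ 3) v1) :=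
          (R.phi v0).injective (by rw [hj, hj2])
        have hs2t : (R.phi x ^ 2) ((R.phi z0 ^ 3) v1) = (R.phi z0 ^ 3) v1 := by
          apply hsinj
          have h3 : (3:ℕ) = 2 + 1 := rfl
          have h2 : (R.phi x ^ 3) ((R.phi z0 ^ 3) v1)
              = R.phi x ((R.phi x ^ 2) ((R.phi z0 ^ 3) v1)) := by
            rw [h3, appSucc']
          rw [← h2, hkey]
        have hG2 : R.phi z0 ((R.phi x ^ 4) ((R.phi z0 ^ 3) v1)) = v3 := by
          have h4 : (4:ℕ) = 3 + 1 := rfl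
          have h5 : (R.phi x ^ 4) ((R.phi z0 ^ 3) v1)
              = (R.phi x ^ 3) (R.phi x ((R.phi z0 ^ 3) v1)) := by
            rw [h4, appSucc]
          rw [h5, ← hh']
          exact hG
        have hs4t : (R.phi x ^ 4) ((R.phi z0 ^ 3) v1) = (R.phi z0 ^ 3) v1 := by
          have h : (4:ℕ) = 2 + 2 := rfl
          rw [h, pow_add, mul_app, hs2t, hs2t]
        rw [hs4t] at hG2
        exact dv53 (by rw [← hG2, hut3])

end NoMix6


section Main
variable {X : Type*} (R : Rack' X) (hR : R.IsBraided)
include hR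

lemma pow_four_or_six (x : X) : (R.phi x) ^ 4 = 1 ∨ (R.phi x) ^ 6 = 1 := by
  by_contra hcon
  push_neg at hcon
  obtain ⟨h4, h6⟩ := hcon
  have hz : ∃ z, (R.phi x ^ 4) z ≠ z := by
    by_contra hc
    push_neg at hc
    exact h4 (Equiv.ext fun p => by rw [Equiv.Perm.one_apply]; exact hc p)
  have hv : ∃ v, (R.phi x ^ 6) v ≠ v := by
    by_contra hc
    push_neg at hc
    exact h6 (Equiv.ext fun p => by rw [Equiv.Perm.one_apply]; exact hc p)
  obtain ⟨z, hz⟩ := hz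
  obtain ⟨v, hv⟩ := hv
  have hz6 : (R.phi x ^ 6) z = z := (claimA R hR x z).resolve_left hz
  have hv4 : (R.phi x ^ 4) v = v := (claimA R hR x v).resolve_right hv
  have hv2 : (R.phi x ^ 2) v ≠ v := by
    intro h
    apply hv
    have h6' : (6:ℕ) = 2 + (2 + 2) := rfl
    rw [h6', pow_add, pow_add, mul_app, mul_app, h, h, h]
  by_cases h3 : (R.phi x ^ 3) z = z
  · have hz1 : R.phi x z ≠ z := fun h => hz (fix_pow _ _ h 4)
    exact no_mix3 R hR x v z hv4 hv2 h3 hz1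
  · exact no_mix6 R hR x v z hv4 hv2 hz6 hz h3

end Main
end BraidedProof

/-- A finite braided indecomposable rack has degree `1`, `2`, `3`, `4` or `6`:
the order of every left translation `φ_x` lies in `{1, 2, 3, 4, 6}`. -/
theorem braided_rack_degree {X : Type*} [Finite X] (R : Rack' X)
    (hR : R.IsBraided) (hInd : R.IsIndecomposable) (x : X) :
    orderOf (R.phi x) ∈ ({1, 2, 3, 4, 6} : Set ℕ) := by
  rcases BraidedProof.pow_four_or_six R hR x with h | h
  · have hd : orderOf (R.phi x) ∣ 4 := orderOf_dvd_of_pow_eq_one h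
    have hle : orderOf (R.phi x) ≤ 4 := Nat.le_of_dvd (by norm_num) hd
    simp only [Set.mem_insert_iff, Set.mem_singleton_iff]
    interval_cases h' : orderOf (R.phi x) <;> simp_all <;> omega
  · have hd : orderOf (R.phi x) ∣ 6 := orderOf_dvd_of_pow_eq_one h
    have hle : orderOf (R.phi x) ≤ 6 := Nat.le_of_dvd (by norm_num) hd
    simp only [Set.mem_insert_iff, Set.mem_singleton_iff]
    interval_cases h' : orderOf (R.phi x) <;> simp_all <;> omega
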